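/- Let A ⊂ ℝ² be an open bounded set, let a_1,…,a_κ ∈ ℝ² be pairwise distinct sites, and let V_i(a) := interior{x ∈ A : ‖x − a_i‖ ≤ ‖x − a_k‖ for all k ∈ {1,…,κ}} be the Voronoi cells. For x ∈ closure(A) set P(x) := {i : x ∈ closure(V_i(a))}. Suppose that no point x ∈ ℝ² satisfies ‖x − a_i‖ = ‖x − a_j‖ = ‖x − a_k‖ = ‖x − a_ℓ‖ for four distinct indices i, j, k, ℓ, and that no point x ∈ ∂A satisfies ‖x − a_i‖ = ‖x − a_j‖ = ‖x − a_k‖ for three distinct indices i, j, k. Then |P(x)| ≤ 3 for every x ∈ A and |P(x)| ≤ 2 for every x ∈ ∂A. -/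

import Mathlib

open Set Metric
open scoped ENNReal NNReal

noncomputable section

/-- The plane ℝ². -/
abbrev Plane : Type := EuclideanSpace ℝ (Fin 2)

/-- Rotation by π/2: `(v₁,v₂)^⊥ = (−v₂,v₁)`. -/
def perp (w : Plane) : Plane := (WithLp.equiv 2 (Fin 2 → ℝ)).symm ![-(w 1), w 0]

/-- The Euclidean Voronoi cell
`V_i(a) = int {x ∈ A : ‖x − a_i‖ ≤ ‖x − a_k‖ for all k}`. -/
def vorCell {κ : ℕ} (A : Set Plane) (a : Fin κ → Plane) (i : Fin κ) : Set Plane :=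
  interior {x | x ∈ A ∧ ∀ k, ‖x - a i‖ ≤ ‖x - a k‖}

/-- Lemma: a point belongs to at most three Voronoi cells, and
at most two if it lies on `∂A`: with pairwise distinct sites, no quadruple
equidistant point in the plane and no triple equidistant point on `∂A`, the set
`P(x) = {i : x ∈ closure(V_i(a))}` has at most 3 elements for `x ∈ A` and at
most 2 elements for `x ∈ ∂A`. -/
theorem statement14 {κ : ℕ}
    (A : Set Plane) (hAopen : IsOpen A) (hAbdd : Bornology.IsBounded A)
    (a : Fin κ → Plane) (hdistinct : Function.Injective a)
    (hno4 : ∀ x : Plane, ∀ i j k l : Fin κ,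
      i ≠ j → i ≠ k → i ≠ l → j ≠ k → j ≠ l → k ≠ l →
      ¬(‖x - a i‖ = ‖x - a j‖ ∧ ‖x - a i‖ = ‖x - a k‖ ∧ ‖x - a i‖ = ‖x - a l‖))
    (hno3bd : ∀ x ∈ frontier A, ∀ i j k : Fin κ,
      i ≠ j → i ≠ k → j ≠ k →
      ¬(‖x - a i‖ = ‖x - a j‖ ∧ ‖x - a i‖ = ‖x - a k‖)) :
    (∀ x ∈ A, {i : Fin κ | x ∈ closure (vorCell A a i)}.ncard ≤ 3) ∧
    (∀ x ∈ frontier A, {i : Fin κ | x ∈ closure (vorCell A a i)}.ncard ≤ 2) := by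

  -- Key fact: membership in the closure of a cell forces the distance inequalities.
  have key : ∀ (x : Plane) (i : Fin κ), x ∈ closure (vorCell A a i) →
      ∀ k, ‖x - a i‖ ≤ ‖x - a k‖ := by
    intro x i hx k
    have hclosed : IsClosed {y : Plane | ∀ k, ‖y - a i‖ ≤ ‖y - a k‖} := by
      have : {y : Plane | ∀ k, ‖y - a i‖ ≤ ‖y - a k‖} =
          ⋂ k, {y : Plane | ‖y - a i‖ ≤ ‖y - a k‖} := by
        ext y; simp
      rw [this]
      exact isClosed_iInter fun k => isClosed_le
        ((continuous_id.sub continuous_const).norm)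
        ((continuous_id.sub continuous_const).norm)
    have hsub : vorCell A a i ⊆ {y : Plane | ∀ k, ‖y - a i‖ ≤ ‖y - a k‖} :=
      interior_subset.trans fun y hy => hy.2
    exact closure_minimal hsub hclosed hx k
  have heq : ∀ (x : Plane) (i j : Fin κ), x ∈ closure (vorCell A a i) →
      x ∈ closure (vorCell A a j) → ‖x - a i‖ = ‖x - a j‖ := fun x i j hi hj =>
    le_antisymm (key x i hi j) (key x j hj i)
  constructor
  · intro x _
    by_contra h
    push_neg at h
    obtain ⟨t, hts, ht4⟩ := Set.exists_subset_card_eq (n := 4) h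
    have htfin : t.Finite := Set.toFinite t
    obtain ⟨l, hl⟩ : t.Nonempty := by
      rw [← Set.ncard_pos htfin]; omega
    have h3 : (t \ {l}).ncard = 3 := by
      rw [Set.ncard_diff_singleton_of_mem hl]; omega
    obtain ⟨i, j, k, hij, hik, hjk, heqset⟩ := Set.ncard_eq_three.mp h3
    have hi : i ∈ t \ {l} := heqset ▸ by simp
    have hj : j ∈ t \ {l} := heqset ▸ by simp
    have hk : k ∈ t \ {l} := heqset ▸ by simp
    have hil : i ≠ l := hi.2
    have hjl : j ≠ l := hj.2
    have hkl : k ≠ l := hk.2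
    have mem : ∀ m ∈ t, x ∈ closure (vorCell A a m) := fun m hm => hts hm
    exact hno4 x i j k l hij hik hil hjk hjl hkl
      ⟨heq x i j (mem i hi.1) (mem j hj.1),
       heq x i k (mem i hi.1) (mem k hk.1),
       heq x i l (mem i hi.1) (mem l hl)⟩
  · intro x hx
    by_contra h
    push_neg at h
    obtain ⟨t, hts, ht3⟩ := Set.exists_subset_card_eq (n := 3) h
    obtain ⟨i, j, k, hij, hik, hjk, rfl⟩ := Set.ncard_eq_three.mp ht3
    have hi : x ∈ closure (vorCell A a i) := hts (by simp)
    have hj : x ∈ closure (vorCell A a j) := hts (by simp)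
    have hk : x ∈ closure (vorCell A a k) := hts (by simp)
    exact hno3bd x hx i j k hij hik hjk ⟨heq x i j hi hj, heq x i k hi hk⟩
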